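/- Let E be a finite-dimensional real inner product space, U ⊆ E a subspace, and P the orthogonal projection onto U. For every c > 0 there exists a constant C > 0 (depending only on c and the dimension of E) such that the following holds. Suppose 0 < ε ≤ 1, and S, A, B are linear operators on E satisfying: (i) ‖S‖ ≤ 1, ‖A‖ ≤ 1, ‖B‖ ≤ 1; (ii) A and B map U into U and fix every vector of the orthogonal complement of U; (iii) ‖P((S − I)v)‖ ≤ ε·‖v‖ for every v ∈ E; (iv) ‖A − B‖ ≤ ε; (v) ‖A² − I‖ ≤ ε² and ‖B² − I‖ ≤ ε². Then for every vector v₀ with ‖v₀‖ ≤ 1, ‖A v₀ − v₀‖ ≤ ε and ‖B v₀ − v₀‖ ≤ ε, and every natural number n with n·ε ≤ c, one has ‖(A∘S)ⁿ v₀ − (B∘S)ⁿ v₀‖ ≤ C·ε. (This is the paper's replacement theorem: A may be replaced by B within (AS)ⁿ with negligible error, with ε playing the role of 1/√N and n in O(√N).) -/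

import Mathlib

open Filter

set_option maxHeartbeats 1000000

/-- Auxiliary purely numerical "energy" estimate. -/
private lemma aux_energy (ε a b q z pw dd : ℝ) (hε : 0 ≤ ε) (ha : 0 ≤ a) (hb : 0 ≤ b)
    (hq : 0 ≤ q) (hpw : 0 ≤ pw) (hdd : 0 ≤ dd) (hz0 : 0 ≤ z)
    (hzq : z ^ 2 = pw ^ 2 + q ^ 2) (hz : z ≤ dd) (hpw1 : a - ε * dd ≤ pw)
    (hd2 : dd ^ 2 = a ^ 2 + b ^ 2) : q ≤ max b a + 2 * ε * a := by
  set m := max b a with hm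
  have hm1 : b ≤ m := le_max_left _ _
  have hm2 : a ≤ m := le_max_right _ _
  have hm0 : 0 ≤ m := le_trans ha hm2
  have hdab : dd ≤ a + b := by nlinarith
  have hb2 : b ^ 2 ≤ m ^ 2 := by nlinarith
  have expand : (m + 2 * ε * a) ^ 2 = m ^ 2 + 4 * (ε * a * m) + 4 * (ε * a) ^ 2 := by ring
  have e6 : (0:ℝ) ≤ ε * a * m := mul_nonneg (mul_nonneg hε ha) hm0
  have e7 : (0:ℝ) ≤ (ε * a) ^ 2 := sq_nonneg _
  have key : q ^ 2 ≤ (m + 2 * ε * a) ^ 2 := by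
    rcases le_or_gt (ε * dd) a with h | h
    · have h1 : (a - ε * dd) ^ 2 ≤ pw ^ 2 := by nlinarith
      have e1 : z ^ 2 ≤ dd ^ 2 := by nlinarith
      have e2 : q ^ 2 ≤ dd ^ 2 - (a - ε * dd) ^ 2 := by linarith
      have e3 : dd ^ 2 - (a - ε * dd) ^ 2 = b ^ 2 + 2 * ε * a * dd - (ε * dd) ^ 2 := by
        linear_combination hd2
      have e4 : 2 * ε * a * dd ≤ 2 * ε * a * (a + b) := by
        have h20 : (0:ℝ) ≤ 2 * ε * a := by positivity
        exact mul_le_mul_of_nonneg_left hdab h20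
      have e5 : 2 * ε * a * (a + b) ≤ 2 * ε * a * (2 * m) := by
        have h20 : (0:ℝ) ≤ 2 * ε * a := by positivity
        exact mul_le_mul_of_nonneg_left (by linarith) h20
      have e8 : 2 * ε * a * (2 * m) = 4 * (ε * a * m) := by ring
      have e9 : (0:ℝ) ≤ (ε * dd) ^ 2 := sq_nonneg _
      linarith [expand, e2, e3, e4, e5, e8, e9, hb2, e6, e7]
    · have e1 : q ^ 2 ≤ a ^ 2 + b ^ 2 := by nlinarith [sq_nonneg pw]
      have h2 : a ≤ 2 * ε * m := by
        have h21 : ε * dd ≤ ε * (a + b) := mul_le_mul_of_nonneg_left hdab hε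
        nlinarith [mul_le_mul_of_nonneg_left hm1 hε, mul_le_mul_of_nonneg_left hm2 hε]
      have e5 : a ^ 2 ≤ 2 * ε * m * a := by nlinarith
      have e8 : 2 * ε * m * a = 2 * (ε * a * m) := by ring
      linarith [expand, e1, e5, e8, hb2, e6, e7]
  have hX : (0:ℝ) ≤ m + 2 * ε * a := by nlinarith [mul_nonneg hε ha]
  by_contra hcon
  push_neg at hcon
  nlinarith [key]

set_option maxHeartbeats 4000000

/-- The replacement theorem: in `(AS)ⁿ`, the operator `A` may be replaced by `B`
with an error of order `ε` (uniform over spaces of a fixed dimension `d`). -/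
theorem replacement_theorem (d : ℕ) (c : ℝ) (hc : 0 < c) :
    ∃ C : ℝ, 0 < C ∧
      ∀ (E : Type) (_ : NormedAddCommGroup E) (_ : InnerProductSpace ℝ E)
        (_ : FiniteDimensional ℝ E), Module.finrank ℝ E = d →
      ∀ (U : Submodule ℝ E) (ε : ℝ), 0 < ε → ε ≤ 1 →
      ∀ S A B : E →L[ℝ] E,
        ‖S‖ ≤ 1 → ‖A‖ ≤ 1 → ‖B‖ ≤ 1 →
        (∀ u ∈ U, A u ∈ U) → (∀ u ∈ U, B u ∈ U) →
        (∀ w ∈ Uᗮ, A w = w) → (∀ w ∈ Uᗮ, B w = w) →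
        (∀ v : E, ‖(U.orthogonalProjectionOnto ((S - 1) v) : E)‖ ≤ ε * ‖v‖) →
        ‖A - B‖ ≤ ε →
        ‖A ^ 2 - 1‖ ≤ ε ^ 2 → ‖B ^ 2 - 1‖ ≤ ε ^ 2 →
        ∀ v₀ : E, ‖v₀‖ ≤ 1 → ‖A v₀ - v₀‖ ≤ ε → ‖B v₀ - v₀‖ ≤ ε →
        ∀ n : ℕ, (n : ℝ) * ε ≤ c →
          ‖((A ∘L S) ^ n) v₀ - ((B ∘L S) ^ n) v₀‖ ≤ C * ε := by
  classical
  refine ⟨(2 + 2 * c) * (3 * c / 2 + 1) * Real.exp ((2 + 2 * c) * c), by positivity, ?_⟩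
  intro E _ _ _ _hdim U ε hε hε1 S A B hS hA hB hAU hBU hAperp hBperp hProj hAB hA2 hB2
    v₀ hv₀ _hAv₀ _hBv₀ n hn
  have hε0 : (0:ℝ) ≤ ε := le_of_lt hε
  -- the orthogonal projection as an operator on E
  set P : E →L[ℝ] E := U.subtypeL.comp (U.orthogonalProjectionOnto) with hPdef
  have hPapply : ∀ v : E, P v = (U.orthogonalProjectionOnto v : E) := fun v => rfl
  have hPmem : ∀ v : E, P v ∈ U := fun v => (U.orthogonalProjectionOnto v).2
  have hPU : ∀ v : E, v ∈ U → P v = v := fun v hv => Submodule.starProjection_eq_self_iff.mpr hv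
  have hPperp : ∀ v : E, v ∈ Uᗮ → P v = 0 := by
    intro v hv
    have h := Submodule.orthogonalProjectionOnto_apply_of_mem_orthogonal (K := U) hv
    rw [hPapply, h]; rfl
  have hQmem : ∀ v : E, v - P v ∈ Uᗮ := fun v => Submodule.sub_starProjection_mem_orthogonal (K := U) v
  have hPyth : ∀ v : E, ‖v‖ ^ 2 = ‖P v‖ ^ 2 + ‖v - P v‖ ^ 2 := by
    intro v
    have h0 : (inner ℝ (P v) (v - P v) : ℝ) = 0 :=
      Submodule.inner_right_of_mem_orthogonal (hPmem v) (hQmem v)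
    have hsum : P v + (v - P v) = v := by abel
    calc ‖v‖ ^ 2 = ‖P v + (v - P v)‖ ^ 2 := by rw [hsum]
      _ = ‖P v‖ ^ 2 + 2 * (inner ℝ (P v) (v - P v) : ℝ) + ‖v - P v‖ ^ 2 := norm_add_sq_real _ _
      _ = ‖P v‖ ^ 2 + ‖v - P v‖ ^ 2 := by rw [h0]; ring
  have hPnorm : ∀ v : E, ‖P v‖ ≤ ‖v‖ := by
    intro v
    nlinarith [hPyth v, norm_nonneg (P v), norm_nonneg v, sq_nonneg ‖v - P v‖]
  -- the defect of S on the U-component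
  have hR : ∀ v : E, ‖P (S v) - P v‖ ≤ ε * ‖v‖ := by
    intro v
    have h1 : P ((S - 1) v) = P (S v) - P v := by
      rw [ContinuousLinearMap.sub_apply, ContinuousLinearMap.one_apply, map_sub]
    have h2 := hProj v
    rw [← hPapply, h1] at h2
    exact h2
  -- pointwise operator estimates
  have hSv : ∀ v : E, ‖S v‖ ≤ ‖v‖ := by
    intro v
    calc ‖S v‖ ≤ ‖S‖ * ‖v‖ := S.le_opNorm v
      _ ≤ 1 * ‖v‖ := mul_le_mul_of_nonneg_right hS (norm_nonneg v)
      _ = ‖v‖ := one_mul _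
  have hAv : ∀ v : E, ‖A v‖ ≤ ‖v‖ := by
    intro v
    calc ‖A v‖ ≤ ‖A‖ * ‖v‖ := A.le_opNorm v
      _ ≤ 1 * ‖v‖ := mul_le_mul_of_nonneg_right hA (norm_nonneg v)
      _ = ‖v‖ := one_mul _
  have hBv : ∀ v : E, ‖B v‖ ≤ ‖v‖ := by
    intro v
    calc ‖B v‖ ≤ ‖B‖ * ‖v‖ := B.le_opNorm v
      _ ≤ 1 * ‖v‖ := mul_le_mul_of_nonneg_right hB (norm_nonneg v)
      _ = ‖v‖ := one_mul _
  have hABv : ∀ v : E, ‖A v - B v‖ ≤ ε * ‖v‖ := by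
    intro v
    have h := (A - B).le_opNorm v
    rw [ContinuousLinearMap.sub_apply] at h
    exact h.trans (mul_le_mul_of_nonneg_right hAB (norm_nonneg v))
  have hA2v : ∀ v : E, ‖A (A v) - v‖ ≤ ε ^ 2 * ‖v‖ := by
    intro v
    have h2 : (A ^ 2 - 1 : E →L[ℝ] E) v = A (A v) - v := by
      rw [ContinuousLinearMap.sub_apply, ContinuousLinearMap.one_apply, pow_two,
        ContinuousLinearMap.mul_apply]
    have h := (A ^ 2 - 1 : E →L[ℝ] E).le_opNorm v
    rw [h2] at h
    exact h.trans (mul_le_mul_of_nonneg_right hA2 (norm_nonneg v))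
  have hB2v : ∀ v : E, ‖B (B v) - v‖ ≤ ε ^ 2 * ‖v‖ := by
    intro v
    have h2 : (B ^ 2 - 1 : E →L[ℝ] E) v = B (B v) - v := by
      rw [ContinuousLinearMap.sub_apply, ContinuousLinearMap.one_apply, pow_two,
        ContinuousLinearMap.mul_apply]
    have h := (B ^ 2 - 1 : E →L[ℝ] E).le_opNorm v
    rw [h2] at h
    exact h.trans (mul_le_mul_of_nonneg_right hB2 (norm_nonneg v))
  -- structure of A and B relative to U
  have hAdecomp : ∀ v : E, A v = A (P v) + (v - P v) := by
    intro v
    conv_lhs => rw [show v = P v + (v - P v) by abel]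
    rw [map_add, hAperp _ (hQmem v)]
  have hBdecomp : ∀ v : E, B v = B (P v) + (v - P v) := by
    intro v
    conv_lhs => rw [show v = P v + (v - P v) by abel]
    rw [map_add, hBperp _ (hQmem v)]
  have hPA : ∀ v : E, P (A v) = A (P v) := by
    intro v
    rw [hAdecomp v, map_add, hPU _ (hAU _ (hPmem v)), hPperp _ (hQmem v), add_zero]
  have hPB : ∀ v : E, P (B v) = B (P v) := by
    intro v
    rw [hBdecomp v, map_add, hPU _ (hBU _ (hPmem v)), hPperp _ (hQmem v), add_zero]
  have hQA : ∀ v : E, A v - P (A v) = v - P v := by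
    intro v; rw [hPA v, hAdecomp v]; abel
  -- the two iteration sequences
  set x : ℕ → E := fun k => ((A ∘L S) ^ k) v₀ with hxdef
  set y : ℕ → E := fun k => ((B ∘L S) ^ k) v₀ with hydef
  have hx : ∀ k, x (k + 1) = A (S (x k)) := by
    intro k
    show ((A ∘L S) ^ (k + 1)) v₀ = _
    rw [pow_succ', ContinuousLinearMap.mul_apply]
    rfl
  have hy : ∀ k, y (k + 1) = B (S (y k)) := by
    intro k
    show ((B ∘L S) ^ (k + 1)) v₀ = _
    rw [pow_succ', ContinuousLinearMap.mul_apply]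
    rfl
  have hx0 : x 0 = v₀ := by show ((A ∘L S) ^ 0) v₀ = v₀; rw [pow_zero]; rfl
  have hy0 : y 0 = v₀ := by show ((B ∘L S) ^ 0) v₀ = v₀; rw [pow_zero]; rfl
  have hxnorm : ∀ k, ‖x k‖ ≤ 1 := by
    intro k
    induction k with
    | zero => rw [hx0]; exact hv₀
    | succ k ih => rw [hx]; exact (hAv _).trans ((hSv _).trans ih)
  have hynorm : ∀ k, ‖y k‖ ≤ 1 := by
    intro k
    induction k with
    | zero => rw [hy0]; exact hv₀
    | succ k ih => rw [hy]; exact (hBv _).trans ((hSv _).trans ih)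
  -- difference and its components
  set D : ℕ → E := fun k => x k - y k with hDdef
  set p : ℕ → E := fun k => P (D k) with hpdef
  set l : ℕ → E := fun k => D k - P (D k) with hldef
  set dd : ℕ → ℝ := fun k => ‖D k‖ with hdddef
  set s : ℕ → ℝ := fun k => ∑ j ∈ Finset.range k, dd j with hsdef
  have hD0 : D 0 = 0 := by show x 0 - y 0 = 0; rw [hx0, hy0, sub_self]
  have hdd0 : ∀ k, 0 ≤ dd k := fun k => norm_nonneg _
  have hs0 : s 0 = 0 := by simp [hsdef]
  have hssucc : ∀ k, s (k + 1) = s k + dd k := by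
    intro k; exact Finset.sum_range_succ _ _
  have hsnonneg : ∀ k, 0 ≤ s k := by
    intro k; exact Finset.sum_nonneg fun j _ => hdd0 j
  have hsmono : ∀ k, s k ≤ s (k + 1) := by
    intro k; rw [hssucc]; linarith [hdd0 k]
  have hDrec : ∀ k, D (k + 1) = A (S (x k)) - B (S (y k)) := by
    intro k; show x (k + 1) - y (k + 1) = _; rw [hx, hy]
  have hDpl : ∀ k, D k = p k + l k := by intro k; show D k = P (D k) + (D k - P (D k)); abel
  have hdk2 : ∀ k, dd k ^ 2 = ‖p k‖ ^ 2 + ‖l k‖ ^ 2 := fun k => hPyth (D k)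
  have hdple : ∀ k, dd k ≤ ‖p k‖ + ‖l k‖ := by
    intro k
    calc dd k = ‖p k + l k‖ := by rw [← hDpl k]
      _ ≤ ‖p k‖ + ‖l k‖ := norm_add_le _ _
  -- the key recursions
  have hPSxy : ∀ k, p (k + 1) = A (P (S (x k))) - B (P (S (y k))) := by
    intro k
    show P (D (k + 1)) = _
    rw [hDrec, map_sub, hPA, hPB]
  have hlrec : ∀ k, l (k + 1) = S (D k) - P (S (D k)) := by
    intro k
    have hSD : S (D k) = S (x k) - S (y k) := map_sub S _ _
    have hδ : P (A (P (S (y k))) - B (P (S (y k)))) = A (P (S (y k))) - B (P (S (y k))) := by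
      rw [map_sub, hPA, hPB, hPU _ (hPmem (S (y k)))]
    have e1 : D (k + 1) = A (S (D k)) + (A (P (S (y k))) - B (P (S (y k)))) := by
      rw [hDrec, hSD, map_sub A]
      have h2 : A (S (y k)) = A (P (S (y k))) + (S (y k) - P (S (y k))) := hAdecomp _
      have h3 : B (S (y k)) = B (P (S (y k))) + (S (y k) - P (S (y k))) := hBdecomp _
      rw [h2, h3]; abel
    show D (k + 1) - P (D (k + 1)) = _
    rw [e1, map_add, hδ, ← hQA (S (D k))]
    abel
  -- energy estimate for the orthogonal component
  have hlnorm : ∀ k, ‖l (k + 1)‖ ≤ max ‖l k‖ ‖p k‖ + 2 * ε * ‖p k‖ := by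
    intro k
    have f2 : ‖S (D k)‖ ^ 2 = ‖P (S (D k))‖ ^ 2 + ‖l (k + 1)‖ ^ 2 := by
      rw [hlrec k]; exact hPyth (S (D k))
    have f1 : ‖S (D k)‖ ≤ dd k := hSv (D k)
    have f3 : ‖p k‖ - ε * dd k ≤ ‖P (S (D k))‖ := by
      have h5 : ‖p k‖ - ‖P (S (D k))‖ ≤ ‖p k - P (S (D k))‖ := norm_sub_norm_le _ _
      have h6 : ‖p k - P (S (D k))‖ = ‖P (S (D k)) - P (D k)‖ := by
        rw [show p k - P (S (D k)) = -(P (S (D k)) - P (D k)) by show P (D k) - _ = _; abel,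
          norm_neg]
      have h7 := hR (D k)
      rw [h6] at h5
      linarith
    exact aux_energy ε ‖p k‖ ‖l k‖ ‖l (k + 1)‖ ‖S (D k)‖ ‖P (S (D k))‖ (dd k) hε0
      (norm_nonneg _) (norm_nonneg _) (norm_nonneg _) (norm_nonneg _) (hdd0 k)
      (norm_nonneg _) f2 f1 f3 (hdk2 k)
  -- two-step estimate for the U-component
  have hpbound2 : ∀ k, ‖p (k + 2)‖ ≤ ‖p k‖ + 3 * ε ^ 2 + ε * dd k + ε * dd (k + 1) := by
    intro k
    have hPx1 : P (x (k + 1)) = A (P (S (x k))) := by rw [hx, hPA]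
    have hPy1 : P (y (k + 1)) = B (P (S (y k))) := by rw [hy, hPB]
    obtain ⟨α, hα⟩ : ∃ z : E, z = P (S (x k)) := ⟨_, rfl⟩
    obtain ⟨β, hβ⟩ : ∃ z : E, z = P (S (y k)) := ⟨_, rfl⟩
    obtain ⟨ρ, hρ⟩ : ∃ z : E, z = P (S (x (k + 1))) - P (x (k + 1)) := ⟨_, rfl⟩
    obtain ⟨σ, hσ⟩ : ∃ z : E, z = P (S (y (k + 1))) - P (y (k + 1)) := ⟨_, rfl⟩
    have hαβ : α - β = P (S (D k)) := by
      rw [hα, hβ, show S (D k) = S (x k) - S (y k) from map_sub S _ _, map_sub]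
    have hρσ : ρ - σ = P (S (D (k + 1))) - P (D (k + 1)) := by
      rw [hρ, hσ, show S (D (k + 1)) = S (x (k + 1)) - S (y (k + 1)) from map_sub S _ _,
        show D (k + 1) = x (k + 1) - y (k + 1) from rfl, map_sub, map_sub]
      abel
    have hvec : p (k + 2) = (A (ρ - σ) + (A σ - B σ)) +
        (((A (A α) - α) - (B (B β) - β)) + (α - β)) := by
      have h1 : P (S (x (k + 1))) = ρ + A α := by rw [hρ, hPx1, ← hα]; abel
      have h2 : P (S (y (k + 1))) = σ + B β := by rw [hσ, hPy1, ← hβ]; abel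
      rw [show p (k + 2) = p ((k + 1) + 1) from rfl, hPSxy (k + 1), h1, h2, map_add A,
        map_add B, map_sub A]
      abel
    have n1 : ‖A (ρ - σ)‖ ≤ ε * dd (k + 1) := by
      refine (hAv _).trans ?_
      rw [hρσ]
      exact hR (D (k + 1))
    have n2 : ‖A σ - B σ‖ ≤ ε ^ 2 := by
      refine (hABv σ).trans ?_
      have h8 : ‖σ‖ ≤ ε * ‖y (k + 1)‖ := by rw [hσ]; exact hR (y (k + 1))
      have h9 : ε * ‖y (k + 1)‖ ≤ ε * 1 := mul_le_mul_of_nonneg_left (hynorm _) hε0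
      nlinarith [norm_nonneg σ]
    have hαle : ‖α‖ ≤ 1 := by
      rw [hα]; exact (hPnorm _).trans ((hSv _).trans (hxnorm k))
    have hβle : ‖β‖ ≤ 1 := by
      rw [hβ]; exact (hPnorm _).trans ((hSv _).trans (hynorm k))
    have n3 : ‖A (A α) - α‖ ≤ ε ^ 2 := by
      refine (hA2v α).trans ?_
      nlinarith [sq_nonneg ε]
    have n4 : ‖B (B β) - β‖ ≤ ε ^ 2 := by
      refine (hB2v β).trans ?_
      nlinarith [sq_nonneg ε]
    have n5 : ‖α - β‖ ≤ ‖p k‖ + ε * dd k := by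
      rw [hαβ]
      calc ‖P (S (D k))‖ = ‖p k + (P (S (D k)) - P (D k))‖ := by
            rw [show p k = P (D k) from rfl]; congr 1; abel
        _ ≤ ‖p k‖ + ‖P (S (D k)) - P (D k)‖ := norm_add_le _ _
        _ ≤ ‖p k‖ + ε * dd k := by linarith [hR (D k)]
    calc ‖p (k + 2)‖ = ‖(A (ρ - σ) + (A σ - B σ)) +
        (((A (A α) - α) - (B (B β) - β)) + (α - β))‖ := by rw [hvec]
      _ ≤ ‖A (ρ - σ) + (A σ - B σ)‖ + ‖((A (A α) - α) - (B (B β) - β)) + (α - β)‖ :=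
          norm_add_le _ _
      _ ≤ (‖A (ρ - σ)‖ + ‖A σ - B σ‖) + ((‖A (A α) - α‖ + ‖B (B β) - β‖) + ‖α - β‖) := by
          have t1 := norm_add_le (A (ρ - σ)) (A σ - B σ)
          have t2 := norm_add_le ((A (A α) - α) - (B (B β) - β)) (α - β)
          have t3 := norm_sub_le (A (A α) - α) (B (B β) - β)
          linarith
      _ ≤ ‖p k‖ + 3 * ε ^ 2 + ε * dd k + ε * dd (k + 1) := by linarith
  -- one-step estimate for the U-component
  have hpsucc : ∀ k, ‖p (k + 1)‖ ≤ ‖p k‖ + ε * dd k + ε := by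
    intro k
    have hvec : p (k + 1) = A (P (S (x k)) - P (S (y k))) +
        (A (P (S (y k))) - B (P (S (y k)))) := by
      rw [hPSxy k, map_sub A]; abel
    have n5 : ‖P (S (x k)) - P (S (y k))‖ ≤ ‖p k‖ + ε * dd k := by
      have hαβ : P (S (x k)) - P (S (y k)) = P (S (D k)) := by
        rw [show S (D k) = S (x k) - S (y k) from map_sub S _ _, map_sub]
      rw [hαβ]
      calc ‖P (S (D k))‖ = ‖p k + (P (S (D k)) - P (D k))‖ := by
            rw [show p k = P (D k) from rfl]; congr 1; abel
        _ ≤ ‖p k‖ + ‖P (S (D k)) - P (D k)‖ := norm_add_le _ _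
        _ ≤ ‖p k‖ + ε * dd k := by linarith [hR (D k)]
    have n6 : ‖A (P (S (y k))) - B (P (S (y k)))‖ ≤ ε := by
      refine (hABv _).trans ?_
      have h8 : ‖P (S (y k))‖ ≤ 1 := (hPnorm _).trans ((hSv _).trans (hynorm k))
      nlinarith
    calc ‖p (k + 1)‖ ≤ ‖A (P (S (x k)) - P (S (y k)))‖ +
          ‖A (P (S (y k))) - B (P (S (y k)))‖ := by rw [hvec]; exact norm_add_le _ _
      _ ≤ ‖p k‖ + ε * dd k + ε := by linarith [hAv (P (S (x k)) - P (S (y k)))]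
  have hp0 : ‖p 0‖ = 0 := by
    show ‖P (D 0)‖ = 0
    rw [hD0, map_zero, norm_zero]
  -- even-index bound on p by induction
  have hpeven : ∀ i : ℕ, ‖p (2 * i)‖ ≤ 3 * i * ε ^ 2 + ε * s (2 * i) := by
    intro i
    induction i with
    | zero =>
      rw [Nat.mul_zero, hp0, hs0]
      push_cast
      norm_num
    | succ i ih =>
      have h2 := hpbound2 (2 * i)
      have hidx : 2 * (i + 1) = 2 * i + 2 := by ring
      have hsx : s (2 * i + 2) = s (2 * i) + dd (2 * i) + dd (2 * i + 1) := by
        rw [show 2 * i + 2 = (2 * i + 1) + 1 from rfl, hssucc, hssucc]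
      rw [hidx, hsx]
      push_cast
      ring_nf
      ring_nf at ih h2
      linarith [ih, h2]
  -- bound on p for all indices up to n
  have hcast : ∀ k : ℕ, k ≤ n → (k : ℝ) * ε ≤ c := by
    intro k hk
    have h1 : (k : ℝ) ≤ (n : ℝ) := Nat.cast_le.mpr hk
    calc (k : ℝ) * ε ≤ (n : ℝ) * ε := mul_le_mul_of_nonneg_right h1 hε0
      _ ≤ c := hn
  have hp_all : ∀ k : ℕ, k ≤ n → ‖p k‖ ≤ (3 * c / 2 + 1) * ε + ε * s k := by
    intro k hk
    rcases Nat.even_or_odd k with ⟨i, hi⟩ | ⟨i, hi⟩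
    · have hi2 : k = 2 * i := by omega
      have h1 := hpeven i
      have h2 : (2 * (i : ℝ)) * ε ≤ c := by
        have h3 := hcast k hk
        rw [hi2] at h3
        push_cast at h3
        linarith
      rw [hi2]
      nlinarith [hsnonneg (2 * i), mul_le_mul_of_nonneg_right h2 hε0]
    · have h1 := hpeven i
      have h2 : (2 * (i : ℝ)) * ε ≤ c := by
        have h3 : 2 * i ≤ n := by omega
        have h4 := hcast (2 * i) h3
        push_cast at h4
        linarith
      have h4 := hpsucc (2 * i)
      have h5 : s (2 * i + 1) = s (2 * i) + dd (2 * i) := hssucc (2 * i)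
      rw [hi, h5]
      nlinarith [hsnonneg (2 * i), hdd0 (2 * i), mul_le_mul_of_nonneg_right h2 hε0]
  have ha0 : (0:ℝ) ≤ 3 * c / 2 + 1 := by positivity
  -- bound on l for all indices up to n
  have hl0 : ‖l 0‖ = 0 := by
    show ‖D 0 - P (D 0)‖ = 0
    rw [hD0, map_zero, sub_zero, norm_zero]
  have hl_all : ∀ k : ℕ, k ≤ n →
      ‖l k‖ ≤ (1 + 2 * ε * k) * ((3 * c / 2 + 1) * ε + ε * s k) := by
    intro k
    induction k with
    | zero =>
      intro _
      rw [hl0, hs0]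
      push_cast
      nlinarith [mul_nonneg ha0 hε0]
    | succ k ih =>
      intro hk
      have hk' : k ≤ n := Nat.le_of_succ_le hk
      have ih' := ih hk'
      have hp' := hp_all k hk'
      have hk0 : (0:ℝ) ≤ (k : ℝ) := Nat.cast_nonneg k
      have hXnn : 0 ≤ (3 * c / 2 + 1) * ε + ε * s k := by
        have h30 := hsnonneg k
        positivity
      have hmax : max ‖l k‖ ‖p k‖ ≤ (1 + 2 * ε * k) * ((3 * c / 2 + 1) * ε + ε * s k) := by
        refine max_le ih' (hp'.trans ?_)
        nlinarith [mul_nonneg (mul_nonneg (by linarith : (0:ℝ) ≤ 2 * ε) hk0) hXnn]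
      have hstep := hlnorm k
      have h2' : 2 * ε * ‖p k‖ ≤ 2 * ε * ((3 * c / 2 + 1) * ε + ε * s k) :=
        mul_le_mul_of_nonneg_left hp' (by linarith)
      have hfac : (0:ℝ) ≤ 1 + 2 * ε * ((k : ℝ) + 1) := by
        nlinarith [mul_nonneg hε0 (by linarith : (0:ℝ) ≤ (k : ℝ) + 1)]
      have h5' : (3 * c / 2 + 1) * ε + ε * s k ≤ (3 * c / 2 + 1) * ε + ε * s (k + 1) := by
        have := mul_le_mul_of_nonneg_left (hsmono k) hε0
        linarith
      have h6' : (1 + 2 * ε * ((k : ℝ) + 1)) * ((3 * c / 2 + 1) * ε + ε * s k) ≤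
          (1 + 2 * ε * ((k : ℝ) + 1)) * ((3 * c / 2 + 1) * ε + ε * s (k + 1)) :=
        mul_le_mul_of_nonneg_left h5' hfac
      push_cast
      nlinarith [hstep, hmax, h2', h6']
  -- combine into a bound on dd
  have hd_all : ∀ k : ℕ, k ≤ n →
      dd k ≤ (2 + 2 * c) * (3 * c / 2 + 1) * ε + (2 + 2 * c) * ε * s k := by
    intro k hk
    have h1 := hdple k
    have h2 := hp_all k hk
    have h3 := hl_all k hk
    have h4 : 2 * ε * (k : ℝ) ≤ 2 * c := by
      have h40 := hcast k hk
      linarith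
    have hXnn : 0 ≤ (3 * c / 2 + 1) * ε + ε * s k := by
      have h30 := hsnonneg k
      positivity
    have h5 : (1 + 2 * ε * (k : ℝ)) * ((3 * c / 2 + 1) * ε + ε * s k) ≤
        (1 + 2 * c) * ((3 * c / 2 + 1) * ε + ε * s k) :=
      mul_le_mul_of_nonneg_right (by linarith) hXnn
    have h6 : dd k ≤ (2 + 2 * c) * ((3 * c / 2 + 1) * ε + ε * s k) := by linarith
    nlinarith [h6]
  -- Gronwall
  set A' : ℝ := (2 + 2 * c) * (3 * c / 2 + 1) with hA'
  set B' : ℝ := 2 + 2 * c with hB'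
  have hA'pos : 0 < A' := by rw [hA']; positivity
  have hB'pos : 0 < B' := by rw [hB']; positivity
  have hA'B' : A' = B' * (3 * c / 2 + 1) := by rw [hA', hB']
  clear_value A' B'
  have hd_all' : ∀ k : ℕ, k ≤ n → dd k ≤ A' * ε + B' * ε * s k := by
    intro k hk
    exact hd_all k hk
  have hgron : ∀ k : ℕ, k ≤ n → s k ≤ (A' / B') * ((1 + B' * ε) ^ k - 1) := by
    intro k
    induction k with
    | zero => intro _; rw [hs0]; simp
    | succ k ih =>
      intro hk
      have hk' : k ≤ n := Nat.le_of_succ_le hk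
      have ih' := ih hk'
      have hd' := hd_all' k hk'
      have hX : (A' / B') * ((1 + B' * ε) ^ (k + 1) - 1) =
          (1 + B' * ε) * ((A' / B') * ((1 + B' * ε) ^ k - 1)) + A' * ε := by
        field_simp
        ring
      rw [hssucc, hX]
      have hXnn : (0:ℝ) ≤ 1 + B' * ε := by positivity
      have hml := mul_le_mul_of_nonneg_left ih' hXnn
      have hexp : (1 + B' * ε) * s k = s k + B' * ε * s k := by ring
      linarith [hml, hd', hexp]
  -- final assembly
  have hsn := hgron n le_rfl
  have hdn := hd_all' n le_rfl
  have hpow : (1 + B' * ε) ^ n ≤ Real.exp (B' * c) := by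
    have h1 : 1 + B' * ε ≤ Real.exp (B' * ε) := by
      linarith [Real.add_one_le_exp (B' * ε)]
    have h2 : (1 + B' * ε) ^ n ≤ (Real.exp (B' * ε)) ^ n :=
      pow_le_pow_left₀ (by positivity) h1 n
    have h3 : (Real.exp (B' * ε)) ^ n = Real.exp ((n : ℝ) * (B' * ε)) :=
      (Real.exp_nat_mul _ n).symm
    have h4 : Real.exp ((n : ℝ) * (B' * ε)) ≤ Real.exp (B' * c) := by
      apply Real.exp_le_exp.mpr
      nlinarith [le_of_lt hB'pos, hn]
    calc (1 + B' * ε) ^ n ≤ (Real.exp (B' * ε)) ^ n := h2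
      _ = Real.exp ((n : ℝ) * (B' * ε)) := h3
      _ ≤ Real.exp (B' * c) := h4
  have hfinal : dd n ≤ A' * Real.exp (B' * c) * ε := by
    have h6 : B' * ε * s n ≤ B' * ε * ((A' / B') * ((1 + B' * ε) ^ n - 1)) :=
      mul_le_mul_of_nonneg_left hsn (mul_nonneg (le_of_lt hB'pos) hε0)
    have h7 : B' * ε * ((A' / B') * ((1 + B' * ε) ^ n - 1)) =
        A' * ε * ((1 + B' * ε) ^ n - 1) := by
      field_simp
    have h8 : A' * ε + A' * ε * ((1 + B' * ε) ^ n - 1) = A' * ε * (1 + B' * ε) ^ n := by ring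
    have h9 : A' * ε * (1 + B' * ε) ^ n ≤ A' * ε * Real.exp (B' * c) :=
      mul_le_mul_of_nonneg_left hpow (mul_nonneg (le_of_lt hA'pos) hε0)
    nlinarith [hdn, h6, h7, h8, h9]
  have hgoal : ‖((A ∘L S) ^ n) v₀ - ((B ∘L S) ^ n) v₀‖ = dd n := rfl
  rw [hgoal]
  exact hfinal
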